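/- Let H ∈ ℂ^{2n×2n} with H = -H^T. Then the similarity transformation of the operator vector 𝔠 by the exponential of the quadratic form satisfies e^{(i/2) 𝔠^T H 𝔠} 𝔠 e^{-(i/2) 𝔠^T H 𝔠} = O 𝔠, where O = e^{-i E H} (the identity holding componentwise: e^{(i/2) 𝔠^T H 𝔠} 𝔠_j e^{-(i/2) 𝔠^T H 𝔠} = Σ_k O_{jk} 𝔠_k). -/

import Mathlib

open Matrix BigOperators
open scoped ComplexOrder

section Helper

open NormedSpace

attribute [local instance] Matrix.linftyOpNormedRing Matrix.linftyOpNormedAlgebra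


theorem conj_exp_of_comm {𝔸 ι : Type*} [NormedRing 𝔸] [NormedAlgebra ℂ 𝔸]
    [CompleteSpace 𝔸] [Fintype ι] [DecidableEq ι]
    (A : 𝔸) (c : ι → 𝔸) (M : Matrix ι ι ℂ) (j : ι)
    (hcomm : ∀ i, A * c i - c i * A = ∑ k, M i k • c k) :
    exp A * c j * exp (-A) = ∑ k, (exp M) j k • c k := by
  let L : 𝔸 →L[ℂ] 𝔸 := ContinuousLinearMap.mul ℂ _ A
  let R : 𝔸 →L[ℂ] 𝔸 := (ContinuousLinearMap.mul ℂ _).flip (-A)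
  let T : 𝔸 →L[ℂ] 𝔸 := L + R
  have hTc : ∀ i, T (c i) = ∑ k, M i k • c k := by
    intro i
    show A * c i + c i * (-A) = _
    rw [mul_neg, ← sub_eq_add_neg]
    exact hcomm i
  have hTpow : ∀ (m : ℕ) (i : ι), (T ^ m) (c i) = ∑ k, (M ^ m) i k • c k := by
    intro m
    induction m with
    | zero => intro i; simp [Matrix.one_apply, ite_smul]
    | succ m ih =>
      intro i
      have h1 : (T ^ (m + 1)) (c i) = (T ^ m) (T (c i)) := by
        rw [pow_succ]; rfl
      rw [h1, hTc i, map_sum]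
      calc ∑ k, (T ^ m) (M i k • c k) = ∑ k, M i k • ∑ l, (M ^ m) k l • c l := by
            simp only [ContinuousLinearMap.map_smul, ih]
        _ = ∑ l, (∑ k, M i k * (M ^ m) k l) • c l := by
            simp only [Finset.smul_sum, Finset.sum_smul, smul_smul]
            exact Finset.sum_comm
        _ = ∑ l, (M ^ (m + 1)) i l • c l := by
            simp only [pow_succ', Matrix.mul_apply]
  -- entry evaluation CLM on ι-matrices
  let e : ι → ι → (Matrix ι ι ℂ →L[ℂ] ℂ) := fun a b =>
    ⟨Matrix.entryLinearMap ℂ ℂ a b,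
      (continuous_apply b).comp (continuous_apply a)⟩
  have hMsum : Summable fun m : ℕ => ((m.factorial : ℂ))⁻¹ • M ^ m := expSeries_summable' M
  have hMentry : ∀ a b, Summable (fun m : ℕ => ((m.factorial : ℂ))⁻¹ • (M ^ m) a b) := by
    intro a b
    have := hMsum.map ((e a b) : Matrix ι ι ℂ →+ ℂ) (e a b).continuous
    exact this
  have hexpMentry : ∀ a b, (exp M) a b = ∑' m : ℕ, ((m.factorial : ℂ))⁻¹ • (M ^ m) a b := by
    intro a b
    rw [exp_eq_tsum ℂ]
    have := (e a b).map_tsum hMsum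
    exact this
  have hTsum : Summable fun m : ℕ => ((m.factorial : ℂ))⁻¹ • T ^ m := expSeries_summable' T
  have h2 : exp T (c j) = ∑' m : ℕ, ((m.factorial : ℂ))⁻¹ • ((T ^ m) (c j)) := by
    rw [exp_eq_tsum ℂ]
    have := (ContinuousLinearMap.apply ℂ (𝔸) (c j)).map_tsum hTsum
    simpa using this
  have h3 : exp T (c j) = ∑ k, (exp M) j k • c k := by
    rw [h2]
    have hcong : ∀ m : ℕ, ((m.factorial : ℂ))⁻¹ • ((T ^ m) (c j))
        = ∑ k, (((m.factorial : ℂ))⁻¹ • (M ^ m) j k) • c k := by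
      intro m
      rw [hTpow m j, Finset.smul_sum]
      simp [smul_smul]
    rw [tsum_congr hcong, Summable.tsum_finsetSum (fun k _ => (hMentry j k).smul_const (c k))]
    refine Finset.sum_congr rfl fun k _ => ?_
    rw [Summable.tsum_smul_const (hMentry j k), hexpMentry j k]
  -- exponential of left/right multiplication
  have hpowL : ∀ (X : 𝔸) (m : ℕ),
      (ContinuousLinearMap.mul ℂ (𝔸) X) ^ m
        = ContinuousLinearMap.mul ℂ (𝔸) (X ^ m) := by
    intro X m
    induction m with
    | zero => ext x; simp
    | succ m ih =>
      rw [pow_succ, ih, pow_succ]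
      refine ContinuousLinearMap.ext fun x => ?_
      show X ^ m * (X * x) = X ^ m * X * x
      rw [mul_assoc]
  have hpowR : ∀ (X : 𝔸) (m : ℕ),
      ((ContinuousLinearMap.mul ℂ (𝔸)).flip X) ^ m
        = (ContinuousLinearMap.mul ℂ (𝔸)).flip (X ^ m) := by
    intro X m
    induction m with
    | zero => ext x; simp
    | succ m ih =>
      rw [pow_succ, ih, pow_succ']
      refine ContinuousLinearMap.ext fun x => ?_
      show x * X * X ^ m = x * (X * X ^ m)
      rw [mul_assoc]
  have hexpL : ∀ X : 𝔸,
      exp (ContinuousLinearMap.mul ℂ (𝔸) X)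
        = ContinuousLinearMap.mul ℂ (𝔸) (exp X) := by
    intro X
    simp only [exp_eq_tsum ℂ]
    calc ∑' m : ℕ, ((m.factorial : ℂ))⁻¹ • (ContinuousLinearMap.mul ℂ 𝔸) X ^ m
        = ∑' m : ℕ, (ContinuousLinearMap.mul ℂ 𝔸) (((m.factorial : ℂ))⁻¹ • X ^ m) :=
          tsum_congr fun m => by rw [_root_.map_smul, hpowL]
      _ = (ContinuousLinearMap.mul ℂ 𝔸) (∑' m : ℕ, ((m.factorial : ℂ))⁻¹ • X ^ m) :=
          ((ContinuousLinearMap.mul ℂ 𝔸).map_tsum (expSeries_summable' (𝕂 := ℂ) X)).symm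
  have hexpR : ∀ X : 𝔸,
      exp ((ContinuousLinearMap.mul ℂ (𝔸)).flip X)
        = (ContinuousLinearMap.mul ℂ (𝔸)).flip (exp X) := by
    intro X
    simp only [exp_eq_tsum ℂ]
    calc ∑' m : ℕ, ((m.factorial : ℂ))⁻¹ • (ContinuousLinearMap.mul ℂ 𝔸).flip X ^ m
        = ∑' m : ℕ, (ContinuousLinearMap.mul ℂ 𝔸).flip (((m.factorial : ℂ))⁻¹ • X ^ m) :=
          tsum_congr fun m => by rw [_root_.map_smul, hpowR]
      _ = (ContinuousLinearMap.mul ℂ 𝔸).flip (∑' m : ℕ, ((m.factorial : ℂ))⁻¹ • X ^ m) :=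
          ((ContinuousLinearMap.mul ℂ 𝔸).flip.map_tsum (expSeries_summable' (𝕂 := ℂ) X)).symm
  have hcom : L * R = R * L := by
    refine ContinuousLinearMap.ext fun x => ?_
    show A * (x * -A) = A * x * -A
    rw [mul_assoc]
  have hexpTsplit : exp T = exp L * exp R := by
    apply NormedSpace.exp_add_of_commute_of_mem_ball (𝕂 := ℂ) hcom
    · exact (expSeries_radius_eq_top ℂ (𝔸 →L[ℂ] 𝔸)).symm ▸ edist_lt_top _ _
    · exact (expSeries_radius_eq_top ℂ (𝔸 →L[ℂ] 𝔸)).symm ▸ edist_lt_top _ _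
  have h4 : exp T (c j) = exp A * c j * exp (-A) := by
    rw [hexpTsplit, hexpL, hexpR]
    show exp A * (c j * exp (-A)) = exp A * c j * exp (-A)
    rw [mul_assoc]
  rw [← h4, h3]

end Helper

noncomputable def Emat (n : ℕ) : Matrix (Fin n ⊕ Fin n) (Fin n ⊕ Fin n) ℂ :=
  Matrix.fromBlocks 0 1 1 0

noncomputable def quadForm (n : ℕ) (c : Fin n ⊕ Fin n → Matrix (Fin (2^n)) (Fin (2^n)) ℂ)
    (H : Matrix (Fin n ⊕ Fin n) (Fin n ⊕ Fin n) ℂ) : Matrix (Fin (2^n)) (Fin (2^n)) ℂ :=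
  ∑ j, ∑ k, H j k • (c j * c k)

lemma Emat_symm (n : ℕ) (a b : Fin n ⊕ Fin n) : Emat n a b = Emat n b a := by
  rcases a with a | a <;> rcases b with b | b <;>
    simp [Emat, Matrix.fromBlocks, Matrix.one_apply, eq_comm]

lemma comm_quadForm (n : ℕ) (c : Fin n ⊕ Fin n → Matrix (Fin (2^n)) (Fin (2^n)) ℂ)
    (hCAR : ∀ j k, c j * c k + c k * c j = Emat n j k • (1 : Matrix (Fin (2^n)) (Fin (2^n)) ℂ))
    (H : Matrix (Fin n ⊕ Fin n) (Fin n ⊕ Fin n) ℂ)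
    (hanti : H = -Hᵀ) (i : Fin n ⊕ Fin n) :
    ((Complex.I / 2) • quadForm n c H) * c i - c i * ((Complex.I / 2) • quadForm n c H)
      = ∑ k, (-(Complex.I • (Emat n * H))) i k • c k := by
  have hH : ∀ a b, H a b = -H b a := by
    intro a b
    conv_lhs => rw [hanti]
    simp
  have triple : ∀ a b, c a * c b * c i - c i * (c a * c b)
      = Emat n b i • c a - Emat n a i • c b := by
    intro a b
    have h1 : c a * c b * c i - c i * (c a * c b)
        = c a * (c b * c i + c i * c b) - (c a * c i + c i * c a) * c b := by
      noncomm_ring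
    rw [h1, hCAR b i, hCAR a i]
    simp [mul_smul_comm, smul_mul_assoc]
  have hQ : quadForm n c H * c i - c i * quadForm n c H
      = ∑ a, ∑ b, H a b • (Emat n b i • c a - Emat n a i • c b) := by
    unfold quadForm
    rw [Finset.sum_mul, Finset.mul_sum, ← Finset.sum_sub_distrib]
    refine Finset.sum_congr rfl fun a _ => ?_
    rw [Finset.sum_mul, Finset.mul_sum, ← Finset.sum_sub_distrib]
    refine Finset.sum_congr rfl fun b _ => ?_
    rw [smul_mul_assoc, mul_smul_comm, ← smul_sub, triple a b]
  have hQ2 : quadForm n c H * c i - c i * quadForm n c H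
      = ∑ k, ((-2 : ℂ) * (Emat n * H) i k) • c k := by
    rw [hQ]
    have expand : ∀ a, ∑ b, H a b • (Emat n b i • c a - Emat n a i • c b)
        = (∑ b, H a b * Emat n b i) • c a - ∑ b, (H a b * Emat n a i) • c b := by
      intro a
      simp only [smul_sub, smul_smul]
      rw [Finset.sum_sub_distrib, Finset.sum_smul]
    calc ∑ a, ∑ b, H a b • (Emat n b i • c a - Emat n a i • c b)
        = ∑ a, ((∑ b, H a b * Emat n b i) • c a) - ∑ a, ∑ b, (H a b * Emat n a i) • c b := by
          rw [← Finset.sum_sub_distrib]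
          exact Finset.sum_congr rfl fun a _ => by rw [expand a]
      _ = ∑ k, ((∑ b, H k b * Emat n b i) • c k) - ∑ k, (∑ a, H a k * Emat n a i) • c k := by
          congr 1
          rw [Finset.sum_comm]
          exact Finset.sum_congr rfl fun k _ => by rw [Finset.sum_smul]
      _ = ∑ k, ((-2 : ℂ) * (Emat n * H) i k) • c k := by
          rw [← Finset.sum_sub_distrib]
          refine Finset.sum_congr rfl fun k _ => ?_
          rw [← sub_smul]
          congr 1
          rw [Matrix.mul_apply, Finset.mul_sum, ← Finset.sum_sub_distrib]
          refine Finset.sum_congr rfl fun b _ => ?_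
          rw [hH k b, Emat_symm n b i]
          ring
  rw [smul_mul_assoc, mul_smul_comm, ← smul_sub, hQ2, Finset.smul_sum]
  refine Finset.sum_congr rfl fun k _ => ?_
  rw [smul_smul]
  congr 1
  simp
  ring

/-- `e^{(i/2)𝔠ᵀH𝔠} 𝔠ⱼ e^{-(i/2)𝔠ᵀH𝔠} = ∑ₖ Oⱼₖ 𝔠ₖ` with `O = e^{-iEH}`. -/
theorem statement2 (n : ℕ) (c : Fin n ⊕ Fin n → Matrix (Fin (2^n)) (Fin (2^n)) ℂ)
    (hCAR : ∀ j k, c j * c k + c k * c j = Emat n j k • (1 : Matrix (Fin (2^n)) (Fin (2^n)) ℂ))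
    (H : Matrix (Fin n ⊕ Fin n) (Fin n ⊕ Fin n) ℂ)
    (hanti : H = -Hᵀ) (j : Fin n ⊕ Fin n) :
    NormedSpace.exp ((Complex.I / 2) • quadForm n c H) * c j *
        NormedSpace.exp (-((Complex.I / 2) • quadForm n c H))
      = ∑ k, (NormedSpace.exp (-(Complex.I • (Emat n * H)))) j k • c k := by
  letI : SeminormedRing (Matrix (Fin (2^n)) (Fin (2^n)) ℂ) := Matrix.linftyOpSemiNormedRing
  letI : NormedRing (Matrix (Fin (2^n)) (Fin (2^n)) ℂ) := Matrix.linftyOpNormedRing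
  letI : NormedAlgebra ℂ (Matrix (Fin (2^n)) (Fin (2^n)) ℂ) := Matrix.linftyOpNormedAlgebra
  exact conj_exp_of_comm ((Complex.I / 2) • quadForm n c H) c (-(Complex.I • (Emat n * H))) j
    (fun i => comm_quadForm n c hCAR H hanti i)
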